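/- If S and G are semifilters and there is a finite-to-one function f : ω → ω such that A ∈ G iff f⁻¹[A] ∈ S, then 𝔭_S ≤ 𝔭_G, where 𝔭_S denotes the least cardinality of a centered subset of S having no lower bound in S (with respect to ⊆*). -/
import Mathlib


open Cardinal

/-- `A ⊆* B`: almost-inclusion of subsets of ω. -/
def AlmostSub (A B : Set ℕ) : Prop := (A \ B).Finite

/-- A semifilter on ω: nonempty, proper, closed upwards under `⊆*`. -/
def IsSemifilter (S : Set (Set ℕ)) : Prop :=
  S.Nonempty ∧ S ≠ Set.univ ∧ ∀ A B : Set ℕ, A ∈ S → AlmostSub A B → B ∈ S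

/-- `F` is centered in `S`: all (nonempty) finite intersections of members of `F` lie in `S`. -/
def CenteredIn (S F : Set (Set ℕ)) : Prop :=
  F ⊆ S ∧ ∀ T : Finset (Set ℕ), T.Nonempty → ↑T ⊆ F → ⋂₀ (T : Set (Set ℕ)) ∈ S

/-- `F` has a `⊆*`-lower bound belonging to `S`. -/
def HasLowerBoundIn (S F : Set (Set ℕ)) : Prop :=
  ∃ A ∈ S, ∀ B ∈ F, AlmostSub A B

/-- `𝔭_S`: the least cardinality of a centered subset of `S` with no lower bound in `S`. -/
noncomputable def pInv (S : Set (Set ℕ)) : Cardinal :=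
  sInf {c | ∃ F : Set (Set ℕ), CenteredIn S F ∧ ¬ HasLowerBoundIn S F ∧ c = #F}

/-- If `S ≥_RB G` via a finite-to-one `f`, then `𝔭_S ≤ 𝔭_G`.  (The hypothesis `hWG`
reflects the standing assumption of the paper that unbounded centered subsets of a
semifilter exist, so that `𝔭_G` is a genuine minimum.) -/
theorem pInv_le_of_RB (S G : Set (Set ℕ)) (hS : IsSemifilter S) (hG : IsSemifilter G)
    (f : ℕ → ℕ) (hfin : ∀ n : ℕ, (f ⁻¹' {n}).Finite)
    (hRB : ∀ A : Set ℕ, A ∈ G ↔ f ⁻¹' A ∈ S)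
    (hWG : ∃ F : Set (Set ℕ), CenteredIn G F ∧ ¬ HasLowerBoundIn G F) :
    pInv S ≤ pInv G := by
  classical
  apply le_csInf
  · obtain ⟨F, h1, h2⟩ := hWG
    exact ⟨#F, F, h1, h2, rfl⟩
  rintro c ⟨F, hcent, hnb, rfl⟩
  set F' : Set (Set ℕ) := (fun B => f ⁻¹' B) '' F with hF'
  have hsub : F' ⊆ S := by
    rintro _ ⟨B, hB, rfl⟩
    exact (hRB B).1 (hcent.1 hB)
  have hcent' : CenteredIn S F' := by
    refine ⟨hsub, ?_⟩
    intro T hTne hTF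
    have hchoice : ∀ t ∈ T, ∃ B, B ∈ F ∧ f ⁻¹' B = t := by
      intro t ht
      obtain ⟨B, hB, hBt⟩ := hTF ht
      exact ⟨B, hB, hBt⟩
    choose g hg1 hg2 using hchoice
    set T₀ : Finset (Set ℕ) := T.attach.image (fun t => g t.1 t.2) with hT₀
    have hT₀ne : T₀.Nonempty := by
      obtain ⟨t, ht⟩ := hTne
      exact ⟨g t ht, Finset.mem_image.2 ⟨⟨t, ht⟩, Finset.mem_attach _ _, rfl⟩⟩
    have hT₀F : ↑T₀ ⊆ F := by
      intro B hB
      simp only [hT₀, Finset.coe_image, Set.mem_image] at hB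
      obtain ⟨⟨t, ht⟩, -, rfl⟩ := hB
      exact hg1 t ht
    have hmem : ⋂₀ (T₀ : Set (Set ℕ)) ∈ G := hcent.2 T₀ hT₀ne hT₀F
    have hS0 : f ⁻¹' (⋂₀ (T₀ : Set (Set ℕ))) ∈ S := (hRB _).1 hmem
    have hsubset : f ⁻¹' (⋂₀ (T₀ : Set (Set ℕ))) ⊆ ⋂₀ (T : Set (Set ℕ)) := by
      intro x hx t ht
      have hmemT₀ : g t ht ∈ (T₀ : Set (Set ℕ)) :=
        Finset.mem_coe.2 (Finset.mem_image.2 ⟨⟨t, ht⟩, Finset.mem_attach _ _, rfl⟩)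
      have hx' : f x ∈ g t ht := hx _ hmemT₀
      have : x ∈ f ⁻¹' (g t ht) := hx'
      rwa [hg2 t ht] at this
    exact hS.2.2 _ _ hS0 (Set.Finite.subset (Set.finite_empty)
      (by rw [Set.diff_eq_empty.2 hsubset]))
  have hnb' : ¬ HasLowerBoundIn S F' := by
    rintro ⟨A, hA, hlb⟩
    apply hnb
    refine ⟨f '' A, ?_, ?_⟩
    · apply (hRB _).2
      apply hS.2.2 A _ hA
      exact Set.Finite.subset Set.finite_empty
        (by rw [Set.diff_eq_empty.2 (Set.subset_preimage_image f A)])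
    · intro B hB
      have h1 : AlmostSub A (f ⁻¹' B) := hlb _ ⟨B, hB, rfl⟩
      have h2 : (f '' A) \ B ⊆ f '' (A \ f ⁻¹' B) := by
        rintro y ⟨⟨x, hx, rfl⟩, hyB⟩
        exact ⟨x, ⟨hx, hyB⟩, rfl⟩
      exact Set.Finite.subset (Set.Finite.image f h1) h2
  exact le_trans (csInf_le' ⟨F', hcent', hnb', rfl⟩) Cardinal.mk_image_le
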